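/- If T is a subcubic tree of order n, then the dissociation number of T is at most (4n+2)/5. -/

import Mathlib

/-- `F` is a dissociation set of `G`: the induced subgraph `G[F]` has maximum degree at most 1. -/
def IsDissocSet {V : Type*} (G : SimpleGraph V) (F : Finset V) : Prop :=
  ∀ v ∈ F, ∀ u ∈ F, ∀ w ∈ F, G.Adj v u → G.Adj v w → u = w

/-- The dissociation number of `G`. -/
noncomputable def dissocNum {V : Type*} [Fintype V] (G : SimpleGraph V) : ℕ :=
  sSup {n | ∃ F : Finset V, IsDissocSet G F ∧ F.card = n}

/-- `F` is a maximum dissociation set of `G`. -/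
def IsMaxDissocSet {V : Type*} [Fintype V] (G : SimpleGraph V) (F : Finset V) : Prop :=
  IsDissocSet G F ∧ F.card = dissocNum G

/-- The number of maximum dissociation sets of `G`. -/
noncomputable def numMaxDissoc {V : Type*} [Fintype V] (G : SimpleGraph V) : ℕ :=
  {F : Finset V | IsMaxDissocSet G F}.ncard

/-- `G` is subcubic: every vertex has degree at most 3. -/
def Subcubic {V : Type*} (G : SimpleGraph V) : Prop :=
  ∀ v : V, (G.neighborSet v).ncard ≤ 3

section AuxKey
open Finset

lemma key {V : Type*} [Fintype V] (T : SimpleGraph V)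
    (hT : T.IsTree) (hsub : Subcubic T) (F : Finset V) (hF : IsDissocSet T F) :
    5 * F.card ≤ 4 * Fintype.card V + 2 := by
  classical
  set n := Fintype.card V
  set d := Fᶜ.card with hd
  have hcard : F.card + d = n := Finset.card_add_card_compl F
  have hedge : T.edgeFinset.card + 1 = n := hT.card_edgeFinset
  have hdeg : ∀ v : V, T.degree v ≤ 3 := by
    intro v
    have := hsub v
    rwa [Set.ncard_eq_toFinset_card'] at this
  set A : Finset T.Dart := univ.filter (fun dt => dt.fst ∈ F ∧ dt.snd ∈ F) with hA
  set B : Finset T.Dart := univ.filter (fun dt => ¬(dt.fst ∈ F ∧ dt.snd ∈ F)) with hB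
  have hAB : A.card + B.card = 2 * T.edgeFinset.card := by
    rw [hA, hB, Finset.card_filter_add_card_filter_not, Finset.card_univ,
      SimpleGraph.dart_card_eq_twice_card_edges]
  have hAcard : A.card ≤ F.card := by
    apply Finset.card_le_card_of_injOn (fun dt => dt.fst)
    · intro dt hdt
      exact ((Finset.mem_filter.mp hdt).2).1
    · intro d1 h1 d2 h2 hfst
      have h1' := (Finset.mem_filter.mp h1).2
      have h2' := (Finset.mem_filter.mp h2).2
      have hsnd : d1.snd = d2.snd := by
        have hfst' : d1.fst = d2.fst := hfst
        apply hF d1.fst h1'.1 d1.snd h1'.2 d2.snd h2'.2 d1.adj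
        rw [hfst']; exact d2.adj
      exact SimpleGraph.Dart.ext _ _ (Prod.ext hfst hsnd)
  set C : Finset T.Dart := univ.filter (fun dt => dt.fst ∉ F) with hC
  have hBcard : B.card ≤ 2 * C.card := by
    have := Finset.card_le_mul_card_image (f := fun dt : T.Dart =>
      if dt.fst ∉ F then dt else dt.symm) B 2 ?_
    · refine this.trans (Nat.mul_le_mul_left 2 (Finset.card_le_card ?_))
      intro b hb
      obtain ⟨a, ha, rfl⟩ := Finset.mem_image.mp hb
      have ha' := (Finset.mem_filter.mp ha).2
      rw [hC, Finset.mem_filter]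
      refine ⟨Finset.mem_univ _, ?_⟩
      by_cases h : a.fst ∉ F
      · simpa [h] using h
      · push_neg at h
        have h2 : a.snd ∉ F := fun hs => ha' ⟨h, hs⟩
        simpa [h] using h2
    · intro b _
      have : (B.filter (fun a => (if a.fst ∉ F then a else a.symm) = b)) ⊆ {b, b.symm} := by
        intro a ha
        have := (Finset.mem_filter.mp ha).2
        by_cases h : a.fst ∉ F
        · simp only [if_pos h] at this
          simp [this]
        · simp only [if_neg h] at this
          have : a = b.symm := by rw [← this, SimpleGraph.Dart.symm_symm]
          simp [this]
      exact (Finset.card_le_card this).trans (Finset.card_insert_le _ _ |>.trans (by simp))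
  have hCcard : C.card ≤ 3 * d := by
    have hsum : C.card = ∑ v ∈ Fᶜ, (C.filter (fun dt => dt.fst = v)).card := by
      apply Finset.card_eq_sum_card_fiberwise
      intro x hx
      rw [Finset.mem_coe] at hx ⊢
      rw [Finset.mem_compl]
      exact (Finset.mem_filter.mp hx).2
    rw [hsum]
    calc ∑ v ∈ Fᶜ, (C.filter (fun dt => dt.fst = v)).card
        ≤ ∑ v ∈ Fᶜ, 3 := by
          apply Finset.sum_le_sum
          intro v _
          have h1 : (C.filter (fun dt => dt.fst = v)) ⊆ univ.filter (fun dt => dt.fst = v) := by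
            intro a ha
            simp [(Finset.mem_filter.mp ha).2]
          have h2 := Finset.card_le_card h1
          have h3 : (univ.filter (fun dt : T.Dart => dt.fst = v)).card = T.degree v :=
            SimpleGraph.dart_fst_fiber_card_eq_degree T v
          exact h2.trans (h3.le.trans (hdeg v))
        _ = 3 * d := by rw [Finset.sum_const, smul_eq_mul, mul_comm]
  have hn1 : 1 ≤ n := by
    have : Nonempty V := hT.isConnected.nonempty
    exact Fintype.card_pos
  omega
end AuxKey

/-- If `T` is a subcubic tree of order `n`, then its dissociation number is at most `(4n+2)/5`. -/
theorem dissocNum_le_of_subcubic {V : Type*} [Fintype V] (T : SimpleGraph V)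
    (hT : T.IsTree) (hsub : Subcubic T) :
    (dissocNum T : ℝ) ≤ (4 * (Fintype.card V : ℝ) + 2) / 5 := by
  have hnat : 5 * dissocNum T ≤ 4 * Fintype.card V + 2 := by
    have hle : dissocNum T ≤ (4 * Fintype.card V + 2) / 5 := by
      apply csSup_le
      · exact ⟨0, ∅, fun v hv => absurd hv (by simp), Finset.card_empty⟩
      rintro m ⟨F, hF, rfl⟩
      rw [Nat.le_div_iff_mul_le (by norm_num)]
      rw [mul_comm]
      exact key T hT hsub F hF
    calc 5 * dissocNum T ≤ 5 * ((4 * Fintype.card V + 2) / 5) := by omega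
      _ ≤ 4 * Fintype.card V + 2 := Nat.mul_div_le _ _
  rw [le_div_iff₀ (by norm_num : (0:ℝ) < 5)]
  have := (Nat.cast_le (α := ℝ)).mpr hnat
  push_cast at this
  linarith
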